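/- The map I ↦ I ∩ W is a bijection from the set of ideals I of R such that the quotient R/I is a finite ring of odd cardinality onto the set of ideals J of W such that W/J is a finite ring of odd cardinality, with inverse J ↦ J·R (the ideal of R generated by J). Moreover, for every such ideal I of R, the natural ring homomorphism W/(I ∩ W) → R/I induced by the inclusion W ⊆ R is an isomorphism. -/

import Mathlib

abbrev Rng : Type := ℤ × Zsqrtd 2 × Zsqrtd 3

def Wset : Set Rng :=
  {p | p.1 ≡ p.2.1.re [ZMOD 2] ∧ p.1 ≡ p.2.2.re + p.2.2.im [ZMOD 2] ∧
       p.2.1.im ≡ p.2.2.im [ZMOD 2]}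

private lemma modeq_iff (a b : ℤ) : a ≡ b [ZMOD 2] ↔ ((a : ZMod 2) = b) :=
  (ZMod.intCast_eq_intCast_iff a b 2).symm

def W : Subring Rng where
  carrier := Wset
  zero_mem' := by refine ⟨?_, ?_, ?_⟩ <;> decide
  one_mem' := by refine ⟨?_, ?_, ?_⟩ <;> decide
  add_mem' := by
    rintro a b ⟨h1, h2, h3⟩ ⟨g1, g2, g3⟩
    refine ⟨h1.add g1, ?_, h3.add g3⟩
    simpa [add_add_add_comm] using h2.add g2
  neg_mem' := by
    rintro a ⟨h1, h2, h3⟩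
    refine ⟨h1.neg, ?_, h3.neg⟩
    have := h2.neg
    simp only [Wset, Set.mem_setOf_eq, Prod.fst_neg, Prod.snd_neg, Zsqrtd.re_neg,
      Zsqrtd.im_neg, Int.modEq_iff_dvd] at this ⊢
    omega
  mul_mem' := by
    rintro a b ⟨h1, h2, h3⟩ ⟨g1, g2, g3⟩
    simp only [Wset, Set.mem_setOf_eq, Prod.fst_mul, Prod.snd_mul, Zsqrtd.re_mul,
      Zsqrtd.im_mul, modeq_iff] at h1 h2 h3 g1 g2 g3 ⊢
    push_cast at h1 h2 h3 g1 g2 g3 ⊢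
    have h0 : (2 : ZMod 2) = 0 := rfl
    refine ⟨?_, ?_, ?_⟩
    · rw [← h1, ← g1, h0]; ring
    · linear_combination (b.1 : ZMod 2) * h2 + ((a.2.2.re : ZMod 2) + a.2.2.im) * g2 -
        ((a.2.2.im : ZMod 2) * b.2.2.im) * h0
    · linear_combination (b.2.1.im : ZMod 2) * h2 - (b.2.1.im : ZMod 2) * h1
        + (b.2.1.re : ZMod 2) * h3 + ((a.2.2.re : ZMod 2) + a.2.2.im) * g3
        + (a.2.2.im : ZMod 2) * g2 - (a.2.2.im : ZMod 2) * g1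
        + ((a.2.2.im : ZMod 2) * b.2.2.im) * h0

lemma mem_W_iff (x : Rng) : x ∈ W ↔ x ∈ Wset := Iff.rfl

lemma two_mul_mem_W (r : Rng) : 2 * r ∈ W := by
  rw [two_mul, mem_W_iff]
  refine ⟨?_, ?_, ?_⟩ <;>
  · simp only [Wset, Set.mem_setOf_eq, Prod.fst_add, Prod.snd_add, Zsqrtd.re_add,
      Zsqrtd.im_add, Int.ModEq]
    omega

lemma exists_pow_two_mem {J : Ideal W} {y : Rng} (hy : y ∈ Ideal.map W.subtype J) :
    ∃ (t : ℕ) (w : W), w ∈ J ∧ (w : Rng) = 2 ^ t * y := by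
  have hy' : y ∈ Ideal.span (⇑W.subtype '' (J : Set W)) := hy
  clear hy
  induction hy' using Submodule.span_induction with
  | mem x hx =>
    obtain ⟨w, hwJ, rfl⟩ := hx
    exact ⟨0, w, hwJ, by simp⟩
  | zero => exact ⟨0, 0, J.zero_mem, by simp⟩
  | add x y _ _ hx hy =>
    obtain ⟨t₁, w₁, hw₁, e₁⟩ := hx
    obtain ⟨t₂, w₂, hw₂, e₂⟩ := hy
    refine ⟨t₁ + t₂, (2 : W) ^ t₂ * w₁ + (2 : W) ^ t₁ * w₂,
      J.add_mem (J.mul_mem_left _ hw₁) (J.mul_mem_left _ hw₂), ?_⟩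
    have h2 : ((2:W):Rng) = 2 := rfl
    push_cast [e₁, e₂, h2]
    ring
  | smul a x _ hx =>
    obtain ⟨t, w, hw, e⟩ := hx
    refine ⟨t + 1, ⟨2 * a, two_mul_mem_W a⟩ * w, J.mul_mem_left _ hw, ?_⟩
    have h2 : ((2:W):Rng) = 2 := rfl
    push_cast [e, smul_eq_mul, h2]
    ring

lemma comap_map_eq {J : Ideal W} {m : ℤ} (hm : Odd m) (hmJ : ((m : ℤ) : W) ∈ J) :
    Ideal.comap W.subtype (Ideal.map W.subtype J) = J := by
  refine le_antisymm ?_ Ideal.le_comap_map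
  intro x hx
  obtain ⟨t, w, hwJ, hw⟩ := exists_pow_two_mem (Ideal.mem_comap.mp hx)
  obtain ⟨k, hk⟩ := hm
  have hcop : IsCoprime ((2 : ℤ) ^ t) m :=
    IsCoprime.pow_left ⟨-k, 1, by omega⟩
  obtain ⟨u, v, huv⟩ := hcop
  have hx' : x = (u : W) * w + ((v : W) * x) * (m : W) := by
    apply Subtype.ext
    have hcast : ((u * 2 ^ t + v * m : ℤ) : Rng) = 1 := by exact_mod_cast congrArg (fun z : ℤ => (z : Rng)) huv
    push_cast [hw] at hcast ⊢
    have hsub : W.subtype x = (x : Rng) := rfl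
    rw [hsub]
    linear_combination (-(x : Rng)) * hcast
  rw [hx']
  exact J.add_mem (J.mul_mem_left _ hwJ) (J.mul_mem_left _ hmJ)

lemma map_comap_eq {I : Ideal Rng} {n : ℤ} (hn : Odd n) (hnI : ((n : ℤ) : Rng) ∈ I) :
    Ideal.map W.subtype (Ideal.comap W.subtype I) = I := by
  refine le_antisymm (Ideal.map_le_iff_le_comap.mpr le_rfl) ?_
  intro x hx
  obtain ⟨k, hk⟩ := hn
  have h2x : (⟨2 * x, two_mul_mem_W x⟩ : W) ∈ Ideal.comap W.subtype I :=
    Ideal.mem_comap.mpr (I.mul_mem_left 2 hx)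
  have hnc : (⟨((n : ℤ) : Rng), intCast_mem W n⟩ : W) ∈ Ideal.comap W.subtype I :=
    Ideal.mem_comap.mpr hnI
  have e1 := Ideal.mem_map_of_mem W.subtype hnc
  have e2 := Ideal.mem_map_of_mem W.subtype h2x
  have hcast : ((n : ℤ) : Rng) = 2 * (k : Rng) + 1 := by exact_mod_cast congrArg (fun z : ℤ => (z : Rng)) hk
  have hx' : x = x * ((n : ℤ) : Rng) - (k : Rng) * (2 * x) := by
    linear_combination (-x) * hcast
  rw [hx']
  exact sub_mem ((Ideal.map W.subtype _).mul_mem_left x e1)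
    ((Ideal.map W.subtype _).mul_mem_left _ e2)

lemma quot_bij {I : Ideal Rng} {n : ℤ} (hn : Odd n) (hnI : ((n : ℤ) : Rng) ∈ I) :
    Function.Bijective (Ideal.quotientMap I W.subtype le_rfl) := by
  refine ⟨Ideal.quotientMap_injective, ?_⟩
  intro y
  obtain ⟨r, rfl⟩ := Ideal.Quotient.mk_surjective y
  obtain ⟨k, hk⟩ := hn
  refine ⟨Ideal.Quotient.mk _ ⟨2 * ((-k : ℤ) * r), two_mul_mem_W _⟩, ?_⟩
  rw [Ideal.quotientMap_mk, Ideal.Quotient.eq]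
  have hcast : ((n : ℤ) : Rng) = 2 * (k : Rng) + 1 := by exact_mod_cast congrArg (fun z : ℤ => (z : Rng)) hk
  have : (W.subtype ⟨2 * ((-k : ℤ) * r), two_mul_mem_W _⟩ : Rng) - r = -(((n : ℤ) : Rng) * r) := by
    show (2 * ((-k : ℤ) * r) : Rng) - r = _
    push_cast
    linear_combination r * hcast
  rw [this]
  exact neg_mem (I.mul_mem_right r hnI)

lemma natCard_cast_mem {A : Type*} [CommRing A] (I : Ideal A) [Finite (A ⧸ I)] :
    ((Nat.card (A ⧸ I) : ℤ) : A) ∈ I := by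
  have h0 : (Nat.card (A ⧸ I)) • (1 : A ⧸ I) = 0 := card_nsmul_eq_zero'
  rw [nsmul_eq_mul, mul_one] at h0
  rw [← Ideal.Quotient.eq_zero_iff_mem, map_intCast]
  exact_mod_cast h0

/-- The ideals of `R` with finite quotient of odd cardinality. -/
def SR : Set (Ideal Rng) := {I | Finite (Rng ⧸ I) ∧ Odd (Nat.card (Rng ⧸ I))}

/-- The ideals of `W` with finite quotient of odd cardinality. -/
def SW : Set (Ideal W) := {J | Finite (W ⧸ J) ∧ Odd (Nat.card (W ⧸ J))}

/-- The map `I ↦ I ∩ W` is a bijection from the set of ideals `I` of `R` with `R/I` a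
finite ring of odd cardinality onto the set of ideals of `W` with finite quotient of odd
cardinality, with inverse `J ↦ J·R`; moreover for every such `I` the natural ring
homomorphism `W/(I ∩ W) → R/I` is an isomorphism (i.e. bijective). -/
theorem stmt14 :
    Set.BijOn (fun I : Ideal Rng => Ideal.comap W.subtype I) SR SW ∧
    (∀ I ∈ SR, Ideal.comap W.subtype I ∈ SW) ∧
    (∀ J ∈ SW, Ideal.map W.subtype J ∈ SR) ∧
    (∀ I ∈ SR, Ideal.map W.subtype (Ideal.comap W.subtype I) = I) ∧
    (∀ J ∈ SW, Ideal.comap W.subtype (Ideal.map W.subtype J) = J) ∧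
    (∀ I ∈ SR, Function.Bijective (Ideal.quotientMap I W.subtype le_rfl)) := by
  -- For `I ∈ SR`, a distinguished odd integer in `I`.
  have hRmem : ∀ I ∈ SR, Odd ((Nat.card (Rng ⧸ I) : ℤ)) ∧ ((Nat.card (Rng ⧸ I) : ℤ) : Rng) ∈ I := by
    intro I hI
    have : Finite (Rng ⧸ I) := hI.1
    exact ⟨Int.odd_coe_nat _ |>.mpr hI.2, natCard_cast_mem I⟩
  have hWmem : ∀ J ∈ SW, Odd ((Nat.card (W ⧸ J) : ℤ)) ∧ ((Nat.card (W ⧸ J) : ℤ) : W) ∈ J := by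
    intro J hJ
    have : Finite (W ⧸ J) := hJ.1
    exact ⟨Int.odd_coe_nat _ |>.mpr hJ.2, natCard_cast_mem J⟩
  have hbij : ∀ I ∈ SR, Function.Bijective (Ideal.quotientMap I W.subtype le_rfl) := by
    intro I hI
    exact quot_bij (hRmem I hI).1 (hRmem I hI).2
  have hmc : ∀ I ∈ SR, Ideal.map W.subtype (Ideal.comap W.subtype I) = I := by
    intro I hI
    exact map_comap_eq (hRmem I hI).1 (hRmem I hI).2
  have hmaps : ∀ I ∈ SR, Ideal.comap W.subtype I ∈ SW := by
    intro I hI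
    have : Finite (Rng ⧸ I) := hI.1
    have e := Equiv.ofBijective _ (hbij I hI)
    have hfin : Finite (W ⧸ Ideal.comap W.subtype I) := Finite.of_equiv _ e.symm
    have hcard : Nat.card (W ⧸ Ideal.comap W.subtype I) = Nat.card (Rng ⧸ I) :=
      Nat.card_eq_of_bijective _ (hbij I hI)
    exact ⟨hfin, hcard ▸ hI.2⟩
  have hmapJ : ∀ J ∈ SW, Ideal.map W.subtype J ∈ SR ∧
      Ideal.comap W.subtype (Ideal.map W.subtype J) = J := by
    intro J hJ
    have hfinJ : Finite (W ⧸ J) := hJ.1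
    obtain ⟨hodd, hmJ⟩ := hWmem J hJ
    have hmR : ((Nat.card (W ⧸ J) : ℤ) : Rng) ∈ Ideal.map W.subtype J := by
      have := Ideal.mem_map_of_mem W.subtype hmJ
      rwa [map_intCast] at this
    have hcm : Ideal.comap W.subtype (Ideal.map W.subtype J) = J := comap_map_eq hodd hmJ
    have hbij' := quot_bij hodd hmR
    have e := Equiv.ofBijective _ hbij'
    have hfin1 : Finite (W ⧸ Ideal.comap W.subtype (Ideal.map W.subtype J)) := by
      rw [hcm]; exact hfinJ
    have hfin2 : Finite (Rng ⧸ Ideal.map W.subtype J) := Finite.of_equiv _ e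
    have hcard : Nat.card (Rng ⧸ Ideal.map W.subtype J) = Nat.card (W ⧸ J) := by
      rw [← Nat.card_eq_of_bijective _ hbij', hcm]
    exact ⟨⟨hfin2, hcard ▸ hJ.2⟩, hcm⟩
  refine ⟨⟨hmaps, ?_, ?_⟩, hmaps, fun J hJ => (hmapJ J hJ).1, hmc,
    fun J hJ => (hmapJ J hJ).2, hbij⟩
  · intro I₁ h₁ I₂ h₂ he
    simp only at he
    rw [← hmc I₁ h₁, he, hmc I₂ h₂]
  · intro J hJ
    exact ⟨Ideal.map W.subtype J, (hmapJ J hJ).1, (hmapJ J hJ).2⟩
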